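/- The qutrit ReMAD channels with γ_{10}=1 or with γ_{21}+γ_{20}=1 are not degradable: in the first case |1⟩⟨2| lies in ker Φ_Γ but not in ker Φ̃_Γ when γ_{21}>0 or γ_{20}>0 appropriately; in the case γ_{21}+γ_{20}=1 the matrix unit |0⟩⟨2| lies in ker Φ_Γ but (when γ_{20}>0) not in ker Φ̃_Γ, so ker Φ_Γ ⊄ ker Φ̃_Γ and no LCPTP degrading map D with Φ̃_Γ = D ∘ Φ_Γ can exist. -/

import Mathlib

open Matrix
open scoped BigOperators
/-- First qutrit ReMAD Kraus operator `K^{(0)} = diag(1, √(1-γ₁₀), √(1-γ₂₁-γ₂₀))`. -/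
noncomputable def K0 (g10 g21 g20 : ℝ) : Matrix (Fin 3) (Fin 3) ℂ :=
  !![(1 : ℂ), 0, 0;
     0, ((Real.sqrt (1 - g10) : ℝ) : ℂ), 0;
     0, 0, ((Real.sqrt (1 - g21 - g20) : ℝ) : ℂ)]

/-- Second qutrit ReMAD Kraus operator `K^{(1)} = √γ₁₀ |0⟩⟨1| + √γ₂₁ |1⟩⟨2|`. -/
noncomputable def K1 (g10 g21 : ℝ) : Matrix (Fin 3) (Fin 3) ℂ :=
  !![(0 : ℂ), ((Real.sqrt g10 : ℝ) : ℂ), 0;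
     0, 0, ((Real.sqrt g21 : ℝ) : ℂ);
     0, 0, 0]

/-- Third qutrit ReMAD Kraus operator `K^{(2)} = √γ₂₀ |0⟩⟨2|`. -/
noncomputable def K2 (g20 : ℝ) : Matrix (Fin 3) (Fin 3) ℂ :=
  !![(0 : ℂ), 0, ((Real.sqrt g20 : ℝ) : ℂ);
     0, 0, 0;
     0, 0, 0]

/-- The qutrit ReMAD channel `Φ_Γ(ρ) = Σ_{i=0}^{2} K^{(i)} ρ K^{(i)†}`. -/
noncomputable def Phi (g10 g21 g20 : ℝ) (ρ : Matrix (Fin 3) (Fin 3) ℂ) :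
    Matrix (Fin 3) (Fin 3) ℂ :=
  K0 g10 g21 g20 * ρ * (K0 g10 g21 g20)ᴴ + K1 g10 g21 * ρ * (K1 g10 g21)ᴴ +
    K2 g20 * ρ * (K2 g20)ᴴ

/-- The complementary channel of the qutrit ReMAD channel,
`Φ̃_Γ(ρ)_{e,e'} = Tr(K^{(e)} ρ K^{(e')†})`. -/
noncomputable def PhiC (g10 g21 g20 : ℝ) (ρ : Matrix (Fin 3) (Fin 3) ℂ) :
    Matrix (Fin 3) (Fin 3) ℂ :=
  Matrix.of fun e e' : Fin 3 =>
    Matrix.trace ((![K0 g10 g21 g20, K1 g10 g21, K2 g20] e) * ρ *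
      (![K0 g10 g21 g20, K1 g10 g21, K2 g20] e')ᴴ)

/-- The qutrit ReMAD channels with `γ₁₀ = 1` or with `γ₂₁ + γ₂₀ = 1` are not degradable.
First case (`γ₁₀ = 1`, with `γ₂₁ = 0` and `γ₂₀ > 0` appropriately): the matrix unit
`|1⟩⟨2|` lies in `ker Φ_Γ` but not in `ker Φ̃_Γ`. Second case (`γ₂₁ + γ₂₀ = 1`, with
`γ₂₀ > 0`): the matrix unit `|0⟩⟨2|` lies in `ker Φ_Γ` but not in `ker Φ̃_Γ`. In both
cases `ker Φ_Γ ⊄ ker Φ̃_Γ`, so no LCPTP degrading map `D` with `Φ̃_Γ = D ∘ Φ_Γ`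
can exist. -/
theorem qutrit_remad_not_degradable (g10 g21 g20 : ℝ)
    (h10 : 0 ≤ g10) (h10' : g10 ≤ 1) (h21 : 0 ≤ g21) (h21' : g21 ≤ 1)
    (h20 : 0 ≤ g20) (h20' : g20 ≤ 1) (hsum : g21 + g20 ≤ 1) :
    ((g10 = 1 ∧ g21 = 0 ∧ 0 < g20) →
      Phi g10 g21 g20 (Matrix.single 1 2 (1 : ℂ)) = 0 ∧
        PhiC g10 g21 g20 (Matrix.single 1 2 (1 : ℂ)) ≠ 0 ∧
        ¬ (∀ ρ : Matrix (Fin 3) (Fin 3) ℂ,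
            Phi g10 g21 g20 ρ = 0 → PhiC g10 g21 g20 ρ = 0)) ∧
    ((g21 + g20 = 1 ∧ 0 < g20) →
      Phi g10 g21 g20 (Matrix.single 0 2 (1 : ℂ)) = 0 ∧
        PhiC g10 g21 g20 (Matrix.single 0 2 (1 : ℂ)) ≠ 0 ∧
        ¬ (∀ ρ : Matrix (Fin 3) (Fin 3) ℂ,
            Phi g10 g21 g20 ρ = 0 → PhiC g10 g21 g20 ρ = 0)) := by
  have hg : (0:ℝ) ≤ g20 := h20
  constructor
  · rintro ⟨e10, e21, hpos⟩
    subst e10; subst e21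
    have hker : Phi 1 0 g20 (Matrix.single 1 2 (1 : ℂ)) = 0 := by
      ext i j
      fin_cases i <;> fin_cases j <;>
        simp [Phi, K0, K1, K2, Matrix.mul_apply, Fin.sum_univ_three,
          Matrix.single, Matrix.conjTranspose_apply, Matrix.vecHead, Matrix.vecTail,
          Matrix.vecMul, dotProduct, Function.comp]
    have hne : PhiC 1 0 g20 (Matrix.single 1 2 (1 : ℂ)) ≠ 0 := by
      intro h
      have h12 := congrFun (congrFun h 1) 2
      simp [PhiC, K0, K1, K2, Matrix.trace, Matrix.diag, Matrix.mul_apply,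
        Fin.sum_univ_three, Matrix.single, Matrix.conjTranspose_apply, Matrix.vecHead, Matrix.vecTail,
          Matrix.vecMul, dotProduct, Function.comp] at h12
      have : Real.sqrt g20 = 0 := by exact_mod_cast h12
      exact absurd (Real.sqrt_eq_zero hg |>.mp this) (ne_of_gt hpos)
    exact ⟨hker, hne, fun H => hne (H _ hker)⟩
  · rintro ⟨esum, hpos⟩
    have e1 : 1 - g21 - g20 = 0 := by linarith
    have hker : Phi g10 g21 g20 (Matrix.single 0 2 (1 : ℂ)) = 0 := by
      ext i j
      fin_cases i <;> fin_cases j <;>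
        simp [Phi, K0, K1, K2, e1, Matrix.mul_apply, Fin.sum_univ_three,
          Matrix.single, Matrix.conjTranspose_apply, Matrix.vecHead, Matrix.vecTail,
          Matrix.vecMul, dotProduct, Function.comp]
    have hne : PhiC g10 g21 g20 (Matrix.single 0 2 (1 : ℂ)) ≠ 0 := by
      intro h
      have h02 := congrFun (congrFun h 0) 2
      simp [PhiC, K0, K1, K2, e1, Matrix.trace, Matrix.diag, Matrix.mul_apply,
        Fin.sum_univ_three, Matrix.single, Matrix.conjTranspose_apply, Matrix.vecHead, Matrix.vecTail,
          Matrix.vecMul, dotProduct, Function.comp] at h02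
      have : Real.sqrt g20 = 0 := by exact_mod_cast h02
      exact absurd (Real.sqrt_eq_zero hg |>.mp this) (ne_of_gt hpos)
    exact ⟨hker, hne, fun H => hne (H _ hker)⟩
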